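/- Let R be a field, and let A ∈ M_n E^m have degree-zero component A₀ = diag(λ₁,…,λ_n) a diagonal matrix with pairwise distinct diagonal entries λ_i ∈ R, and degree-one component A₁ = (v_{ij}) with v_{ij} ∈ E^m_1. Let f(x) = ∏_{i=1}^n (x − λ_i) be the characteristic polynomial of A₀ and set B = f(A). Then the degree-one component B₁ of B equals the diagonal matrix diag(f'(λ₁)v₁₁, …, f'(λ_n)v_{nn}), where f' denotes the formal derivative of f. -/

import Mathlib

open Polynomial DirectSum

set_option maxHeartbeats 1600000

section Graded
variable {A σ : Type*} [Ring A] [SetLike σ A] [AddSubgroupClass σ A]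
  (𝒜 : ℕ → σ) [GradedRing 𝒜]

lemma gch_dcoe_add (k : ℕ) (a b : A) :
    (decompose 𝒜 (a + b) k : A) = (decompose 𝒜 a k : A) + (decompose 𝒜 b k : A) := by
  rw [decompose_add, DirectSum.add_apply, AddMemClass.coe_add]

lemma gch_dcoe_zero (k : ℕ) : (decompose 𝒜 (0 : A) k : A) = 0 := by
  rw [decompose_zero]; rfl

lemma gch_dcoe_sub (k : ℕ) (a b : A) :
    (decompose 𝒜 (a - b) k : A) = (decompose 𝒜 a k : A) - (decompose 𝒜 b k : A) := by
  have h := gch_dcoe_add 𝒜 k (a - b) b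
  rw [sub_add_cancel] at h
  rw [h, add_sub_cancel_right]

lemma gch_dcoe_sum {ι : Type*} (s : Finset ι) (f : ι → A) (k : ℕ) :
    (decompose 𝒜 (∑ i ∈ s, f i) k : A) = ∑ i ∈ s, (decompose 𝒜 (f i) k : A) := by
  classical
  induction s using Finset.cons_induction with
  | empty => simp [gch_dcoe_zero]
  | cons i s hi ih => rw [Finset.sum_cons, Finset.sum_cons, gch_dcoe_add, ih]

lemma gch_dcoe_one0 : (decompose 𝒜 (1 : A) 0 : A) = 1 :=
  decompose_of_mem_same 𝒜 SetLike.GradedOne.one_mem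

lemma gch_dcoe_one1 : (decompose 𝒜 (1 : A) 1 : A) = 0 :=
  decompose_of_mem_ne 𝒜 SetLike.GradedOne.one_mem (by omega : (0:ℕ) ≠ 1)

lemma gch_d0_mul (x y : A) :
    (decompose 𝒜 (x * y) 0 : A) =
      (decompose 𝒜 x 0 : A) * (decompose 𝒜 y 0 : A) := by
  have h := map_mul (GradedRing.projZeroRingHom 𝒜) x y
  simpa only [GradedRing.projZeroRingHom_apply] using h

lemma gch_d1_mul_hom {i j : ℕ} {x y : A} (hx : x ∈ 𝒜 i) (hy : y ∈ 𝒜 j) :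
    (decompose 𝒜 (x * y) 1 : A) =
      (decompose 𝒜 x 0 : A) * (decompose 𝒜 y 1 : A) +
      (decompose 𝒜 x 1 : A) * (decompose 𝒜 y 0 : A) := by
  have hxy : x * y ∈ 𝒜 (i + j) := SetLike.mul_mem_graded hx hy
  rcases eq_or_ne i 0 with rfl | hi
  · rcases eq_or_ne j 0 with rfl | hj
    · rw [decompose_of_mem_ne 𝒜 hxy (by omega : (0+0:ℕ) ≠ 1),
        decompose_of_mem_ne 𝒜 hx (by omega : (0:ℕ) ≠ 1),
        decompose_of_mem_ne 𝒜 hy (by omega : (0:ℕ) ≠ 1)]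
      rw [mul_zero, zero_mul, add_zero]
    · rcases eq_or_ne j 1 with rfl | hj1
      · rw [decompose_of_mem_same 𝒜 (show x * y ∈ 𝒜 1 by simpa using hxy),
          decompose_of_mem_same 𝒜 hx, decompose_of_mem_same 𝒜 hy,
          decompose_of_mem_ne 𝒜 hx (by omega : (0:ℕ) ≠ 1)]
        rw [zero_mul, add_zero]
      · rw [decompose_of_mem_ne 𝒜 hxy (show 0 + j ≠ 1 by omega),
          decompose_of_mem_ne 𝒜 hy hj1, decompose_of_mem_ne 𝒜 hy hj,
          decompose_of_mem_ne 𝒜 hx (by omega : (0:ℕ) ≠ 1)]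
        rw [mul_zero, zero_mul, add_zero]
  · rcases eq_or_ne i 1 with rfl | hi1
    · rcases eq_or_ne j 0 with rfl | hj
      · rw [decompose_of_mem_same 𝒜 (show x * y ∈ 𝒜 1 by simpa using hxy),
          decompose_of_mem_same 𝒜 hx, decompose_of_mem_same 𝒜 hy,
          decompose_of_mem_ne 𝒜 hx (by omega : (1:ℕ) ≠ 0)]
        rw [zero_mul, zero_add]
      · rw [decompose_of_mem_ne 𝒜 hxy (show 1 + j ≠ 1 by omega),
          decompose_of_mem_ne 𝒜 hy hj,
          decompose_of_mem_ne 𝒜 hx (by omega : (1:ℕ) ≠ 0)]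
        rw [zero_mul, mul_zero, add_zero]
    · rw [decompose_of_mem_ne 𝒜 hxy (show i + j ≠ 1 by omega),
        decompose_of_mem_ne 𝒜 hx hi, decompose_of_mem_ne 𝒜 hx hi1]
      rw [zero_mul, zero_mul, add_zero]

/-- degree-1 component of a product. -/
lemma gch_d1_mul (x y : A) :
    (decompose 𝒜 (x * y) 1 : A) =
      (decompose 𝒜 x 0 : A) * (decompose 𝒜 y 1 : A) +
      (decompose 𝒜 x 1 : A) * (decompose 𝒜 y 0 : A) := by
  induction x using DirectSum.Decomposition.inductionOn 𝒜 with
  | zero => simp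
  | @homogeneous i x =>
    induction y using DirectSum.Decomposition.inductionOn 𝒜 with
    | zero => simp
    | @homogeneous j y => exact gch_d1_mul_hom 𝒜 x.2 y.2
    | add a b ha hb =>
      rw [mul_add, gch_dcoe_add 𝒜 1 (↑x * a) (↑x * b), gch_dcoe_add 𝒜 1 a b,
        gch_dcoe_add 𝒜 0 a b, ha, hb, mul_add, mul_add]
      abel
  | add a b ha hb =>
    rw [add_mul, gch_dcoe_add 𝒜 1 (a * y) (b * y), gch_dcoe_add 𝒜 1 a b,
      gch_dcoe_add 𝒜 0 a b, ha, hb, add_mul, add_mul]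
    abel
end Graded

section Scalar
variable {R : Type*} [CommRing R] {n : ℕ}

/-- Auxiliary scalar: `gchAux lam r s t = ∑ₖ ∏_{i before k}(λᵣ-λᵢ) ∏_{i after k}(λₛ-λᵢ)`. -/
def gchAux (lam : Fin n → R) (r s : Fin n) : List (Fin n) → R
  | [] => 0
  | k :: t => (lam r - lam k) * gchAux lam r s t + ((t.map fun i => lam s - lam i)).prod

lemma gch_eval_listprod (lam : Fin n → R) (c : R) (t : List (Fin n)) :
    ((t.map fun i => (X : R[X]) - C (lam i)).prod).eval c =
      (t.map fun i => c - lam i).prod := by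
  induction t with
  | nil => simp
  | cons k t ih => simp [ih]

lemma gchAux_diag (lam : Fin n → R) (r : Fin n) (t : List (Fin n)) :
    gchAux lam r r t =
      (Polynomial.derivative ((t.map fun i => (X : R[X]) - C (lam i)).prod)).eval (lam r) := by
  induction t with
  | nil => simp [gchAux]
  | cons k t ih =>
    simp only [gchAux, List.map_cons, List.prod_cons, derivative_mul, eval_add, eval_mul,
      derivative_sub, derivative_X, derivative_C, sub_zero, eval_one, one_mul, eval_sub,
      eval_X, eval_C, ih, gch_eval_listprod]
    ring

lemma gchAux_offdiag (lam : Fin n → R) (r s : Fin n) (t : List (Fin n)) :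
    (lam r - lam s) * gchAux lam r s t =
      (t.map fun i => lam r - lam i).prod - (t.map fun i => lam s - lam i).prod := by
  induction t with
  | nil => simp [gchAux]
  | cons k t ih =>
    simp only [gchAux, List.map_cons, List.prod_cons]
    linear_combination (lam r - lam k) * ih
end Scalar

section Main
variable {R : Type*} [Field R] {m n : ℕ}

local notation "E" => ExteriorAlgebra R (Fin m → R)
local notation "𝒜" => (fun i : ℕ => ⋀[R]^i (Fin m → R))

lemma gch_prod (A : Matrix (Fin n) (Fin n) E) (lam : Fin n → R)
    (hA₀ : ∀ i j, (decompose 𝒜 (A i j) 0 : E) = algebraMap R E (Matrix.diagonal lam i j))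
    (v : Matrix (Fin n) (Fin n) E)
    (hA₁ : ∀ i j, (decompose 𝒜 (A i j) 1 : E) = v i j)
    (t : List (Fin n)) :
    (∀ r s, (decompose 𝒜
        (((t.map fun k => A - algebraMap R (Matrix (Fin n) (Fin n) E) (lam k)).prod) r s) 0 : E)
        = algebraMap R E (if r = s then ((t.map fun i => lam r - lam i)).prod else 0))
    ∧ (∀ r s, (decompose 𝒜
        (((t.map fun k => A - algebraMap R (Matrix (Fin n) (Fin n) E) (lam k)).prod) r s) 1 : E)
        = algebraMap R E (gchAux lam r s t) * v r s) := by
  have halg : ∀ c : R, algebraMap R E c ∈ 𝒜 0 := fun c => SetLike.algebraMap_mem_graded _ c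
  have hM0 : ∀ (k : Fin n) r j,
      (decompose 𝒜 ((A - algebraMap R (Matrix (Fin n) (Fin n) E) (lam k)) r j) 0 : E)
        = algebraMap R E (if r = j then lam r - lam k else 0) := by
    intro k r j
    rw [Matrix.sub_apply, gch_dcoe_sub, hA₀, Matrix.algebraMap_matrix_apply,
      Matrix.diagonal_apply]
    rcases eq_or_ne r j with rfl | h
    · rw [if_pos rfl, if_pos rfl, if_pos rfl, decompose_of_mem_same 𝒜 (halg (lam k)),
        ← map_sub]
    · rw [if_neg h, if_neg h, if_neg h, gch_dcoe_zero, sub_zero, map_zero]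
  have hM1 : ∀ (k : Fin n) r j,
      (decompose 𝒜 ((A - algebraMap R (Matrix (Fin n) (Fin n) E) (lam k)) r j) 1 : E)
        = v r j := by
    intro k r j
    rw [Matrix.sub_apply, gch_dcoe_sub, hA₁, Matrix.algebraMap_matrix_apply]
    rcases eq_or_ne r j with rfl | h
    · rw [if_pos rfl, decompose_of_mem_ne 𝒜 (halg (lam k)) (by omega : (0:ℕ) ≠ 1), sub_zero]
    · rw [if_neg h, gch_dcoe_zero, sub_zero]
  induction t with
  | nil =>
    constructor <;> intro r s <;>
      simp only [List.map_nil, List.prod_nil, Matrix.one_apply, gchAux] <;>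
      rcases eq_or_ne r s with rfl | h
    · rw [if_pos rfl, if_pos rfl, gch_dcoe_one0, map_one]
    · rw [if_neg h, if_neg h, gch_dcoe_zero, map_zero]
    · rw [if_pos rfl, gch_dcoe_one1, map_zero, zero_mul]
    · rw [if_neg h, gch_dcoe_zero, map_zero, zero_mul]
  | cons k t ih =>
    obtain ⟨ih0, ih1⟩ := ih
    constructor <;> intro r s
    · rw [List.map_cons, List.prod_cons, Matrix.mul_apply, gch_dcoe_sum]
      have hterm : ∀ j, (decompose 𝒜
          ((A - algebraMap R (Matrix (Fin n) (Fin n) E) (lam k)) r j *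
            ((t.map fun k => A - algebraMap R (Matrix (Fin n) (Fin n) E) (lam k)).prod) j s) 0 : E)
          = algebraMap R E ((if r = j then lam r - lam k else 0) *
              (if j = s then ((t.map fun i => lam j - lam i)).prod else 0)) := by
        intro j
        rw [gch_d0_mul, hM0, ih0, ← map_mul]
      simp only [hterm]
      rw [← map_sum]
      congr 1
      rcases eq_or_ne r s with rfl | h
      · rw [if_pos rfl, List.map_cons, List.prod_cons]
        rw [Finset.sum_eq_single r]
        · rw [if_pos rfl, if_pos rfl]
        · intro j _ hj
          rw [if_neg (fun hh => hj hh.symm), zero_mul]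
        · intro h; exact absurd (Finset.mem_univ r) h
      · rw [if_neg h]
        apply Finset.sum_eq_zero
        intro j _
        rcases eq_or_ne r j with rfl | hr
        · rw [if_neg h, mul_zero]
        · rw [if_neg hr, zero_mul]
    · rw [List.map_cons, List.prod_cons, Matrix.mul_apply, gch_dcoe_sum]
      have hterm : ∀ j, (decompose 𝒜
          ((A - algebraMap R (Matrix (Fin n) (Fin n) E) (lam k)) r j *
            ((t.map fun k => A - algebraMap R (Matrix (Fin n) (Fin n) E) (lam k)).prod) j s) 1 : E)
          = algebraMap R E (if r = j then lam r - lam k else 0) *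
              (algebraMap R E (gchAux lam j s t) * v j s) +
            v r j * algebraMap R E (if j = s then ((t.map fun i => lam j - lam i)).prod else 0) := by
        intro j
        rw [gch_d1_mul, hM0, hM1, ih0, ih1]
      simp only [hterm]
      rw [Finset.sum_add_distrib]
      have h1 : ∑ j, algebraMap R E (if r = j then lam r - lam k else 0) *
          (algebraMap R E (gchAux lam j s t) * v j s)
          = algebraMap R E ((lam r - lam k) * gchAux lam r s t) * v r s := by
        rw [Finset.sum_eq_single r]
        · rw [if_pos rfl, ← mul_assoc, ← map_mul]
        · intro j _ hj
          rw [if_neg (fun hh => hj hh.symm), map_zero, zero_mul]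
        · intro h; exact absurd (Finset.mem_univ r) h
      have h2 : ∑ j, v r j * algebraMap R E
            (if j = s then ((t.map fun i => lam j - lam i)).prod else 0)
          = algebraMap R E ((t.map fun i => lam s - lam i).prod) * v r s := by
        rw [Finset.sum_eq_single s]
        · rw [if_pos rfl, ← Algebra.commutes]
        · intro j _ hj
          rw [if_neg hj, map_zero, mul_zero]
        · intro h; exact absurd (Finset.mem_univ s) h
      rw [h1, h2, gchAux, map_add, add_mul]
end Main



open Polynomial in
/-- If `A₀ = diag(λ₁, …, λₙ)` has pairwise distinct diagonal entries, `A₁ = (vᵢⱼ)`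
with `vᵢⱼ` of degree 1, and `B = f(A)` where `f` is the characteristic polynomial
of `A₀`, then the degree-one component of `B` is `diag(f'(λ₁)v₁₁, …, f'(λₙ)vₙₙ)`. -/
theorem grassmann_cayley_hamilton_lemma_degree_one
    (R : Type*) [Field R] (m n : ℕ)
    (A : Matrix (Fin n) (Fin n) (ExteriorAlgebra R (Fin m → R)))
    (lam : Fin n → R) (hlam : Function.Injective lam)
    (hA₀ : ∀ i j, (DirectSum.decompose (fun i : ℕ => ⋀[R]^i (Fin m → R)) (A i j) 0 :
        ExteriorAlgebra R (Fin m → R)) =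
      algebraMap R _ (Matrix.diagonal lam i j))
    (v : Matrix (Fin n) (Fin n) (ExteriorAlgebra R (Fin m → R)))
    (hv : ∀ i j, v i j ∈ ⋀[R]^1 (Fin m → R))
    (hA₁ : ∀ i j, (DirectSum.decompose (fun i : ℕ => ⋀[R]^i (Fin m → R)) (A i j) 1 :
        ExteriorAlgebra R (Fin m → R)) = v i j)
    (f : R[X]) (hf : f = ∏ i, (X - C (lam i)))
    (B : Matrix (Fin n) (Fin n) (ExteriorAlgebra R (Fin m → R)))
    (hB : B = Polynomial.aeval A f) :
    (fun r s => (DirectSum.decompose (fun i : ℕ => ⋀[R]^i (Fin m → R)) (B r s) 1 :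
        ExteriorAlgebra R (Fin m → R))) =
      Matrix.diagonal (fun i =>
        algebraMap R _ ((Polynomial.derivative f).eval (lam i)) * v i i) := by
  subst hf hB
  have hflist : (∏ i, (X - C (lam i)) : R[X]) =
      ((List.finRange n).map fun i => (X : R[X]) - C (lam i)).prod := by
    rw [Fin.prod_univ_def]
  have hexp : (Polynomial.aeval A (∏ i, (X - C (lam i)) : R[X])) =
      ((List.finRange n).map fun k =>
        A - algebraMap R (Matrix (Fin n) (Fin n) (ExteriorAlgebra R (Fin m → R))) (lam k)).prod := by
    rw [hflist, map_list_prod (Polynomial.aeval A), List.map_map]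
    congr 1
    apply List.map_congr_left
    intro k _
    simp only [Function.comp_apply, map_sub, aeval_X, aeval_C]
  obtain ⟨h0, h1⟩ := gch_prod A lam hA₀ v hA₁ (List.finRange n)
  funext r s
  rw [hexp, h1, Matrix.diagonal_apply]
  rcases eq_or_ne r s with rfl | h
  · rw [if_pos rfl, gchAux_diag, hflist]
  · rw [if_neg h]
    have hc : lam r - lam s ≠ 0 := sub_ne_zero.2 (fun hh => h (hlam hh))
    have hz : gchAux lam r s (List.finRange n) = 0 := by
      have hoff := gchAux_offdiag lam r s (List.finRange n)
      have hr0 : ((List.finRange n).map fun i => lam r - lam i).prod = 0 :=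
        List.prod_eq_zero (by
          refine List.mem_map.2 ⟨r, List.mem_finRange r, ?_⟩
          rw [sub_self])
      have hs0 : ((List.finRange n).map fun i => lam s - lam i).prod = 0 :=
        List.prod_eq_zero (by
          refine List.mem_map.2 ⟨s, List.mem_finRange s, ?_⟩
          rw [sub_self])
      rw [hr0, hs0, sub_zero] at hoff
      exact (mul_eq_zero.1 hoff).resolve_left hc
    rw [hz, map_zero, zero_mul]
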